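/- If X_1, X_2 are independent copies of a G-valued random variable X and H(X_1+X_2) = H(X_1+X_2 | X_2), then X_1+X_2 is independent of X_2, and consequently range(X) − range(X) is a finite subgroup of G on a coset of which X is uniformly distributed. -/

import Mathlib

open Real
open scoped BigOperators Pointwise Classical

/-- A finitely supported probability space. -/
structure FinProb (Ω : Type*) [Fintype Ω] where
  p : Ω → ℝ
  nonneg : ∀ ω, 0 ≤ p ω
  sum_one : ∑ ω, p ω = 1

/-- Probability that the random variable `X` takes the value `s`. -/
noncomputable def prob {Ω S : Type*} [Fintype Ω] (μ : FinProb Ω) (X : Ω → S) (s : S) : ℝ :=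
  ∑ ω, if X ω = s then μ.p ω else 0

/-- Shannon entropy of a discrete random variable. -/
noncomputable def entropy {Ω S : Type*} [Fintype Ω] (μ : FinProb Ω) (X : Ω → S) : ℝ :=
  ∑ s ∈ Finset.univ.image X, Real.negMulLog (prob μ X s)

/-- Conditional Shannon entropy `H(X|Y) = H(X,Y) - H(Y)`. -/
noncomputable def condEntropy {Ω S T : Type*} [Fintype Ω] (μ : FinProb Ω)
    (X : Ω → S) (Y : Ω → T) : ℝ :=
  entropy μ (fun ω => (X ω, Y ω)) - entropy μ Y

/-- The essential range of a random variable: values attained with positive probability. -/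
noncomputable def rangeF {Ω S : Type*} [Fintype Ω] (μ : FinProb Ω) (X : Ω → S) : Finset S :=
  (Finset.univ.image X).filter (fun s => prob μ X s ≠ 0)

/-- Two random variables (on possibly different spaces) have the same distribution. -/
def IdentDist {Ω Ω' S : Type*} [Fintype Ω] [Fintype Ω'] (μ : FinProb Ω) (X : Ω → S)
    (μ' : FinProb Ω') (Y : Ω' → S) : Prop :=
  ∀ s, prob μ X s = prob μ' Y s

/-- Independence of two random variables. -/
def IndepRV {Ω S T : Type*} [Fintype Ω] (μ : FinProb Ω) (X : Ω → S) (Y : Ω → T) : Prop :=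
  ∀ s t, prob μ (fun ω => (X ω, Y ω)) (s, t) = prob μ X s * prob μ Y t

/-- Joint independence of a finite family of random variables. -/
def IndepFam {Ω ι : Type*} [Fintype Ω] [Fintype ι] {S : ι → Type*}
    (μ : FinProb Ω) (X : ∀ i, Ω → S i) : Prop :=
  ∀ f : ∀ i, S i, prob μ (fun ω i => X i ω) f = ∏ i, prob μ (X i) (f i)

/-- `X` and `Y` are conditionally independent given `W`. -/
def CondIndepGiven {Ω S T U : Type*} [Fintype Ω] (μ : FinProb Ω)
    (X : Ω → S) (Y : Ω → T) (W : Ω → U) : Prop :=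
  ∀ s t u, prob μ (fun ω => (X ω, Y ω, W ω)) (s, t, u) * prob μ W u
    = prob μ (fun ω => (X ω, W ω)) (s, u) * prob μ (fun ω => (Y ω, W ω)) (t, u)

/-- `Y` is determined by `X` (almost surely). -/
def Determines {Ω S T : Type*} [Fintype Ω] (μ : FinProb Ω) (X : Ω → S) (Y : Ω → T) : Prop :=
  ∃ f : S → T, ∀ ω, μ.p ω ≠ 0 → Y ω = f (X ω)

/-- The entropy transport distance between the distributions of `X` and `Y`:
the infimum of `H(Z)` over random variables `Z` (coupled with a copy `X'` of `X`)
such that `X' + Z` is distributed as `Y`. -/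
noncomputable def transDist {Ω₁ Ω₂ G : Type*} [Fintype Ω₁] [Fintype Ω₂] [AddCommGroup G]
    (μ : FinProb Ω₁) (X : Ω₁ → G) (ν : FinProb Ω₂) (Y : Ω₂ → G) : ℝ :=
  sInf {h : ℝ | ∃ (n : ℕ) (μ' : FinProb (Fin n)) (X' Z : Fin n → G),
    IdentDist μ' X' μ X ∧ IdentDist μ' (fun ω => X' ω + Z ω) ν Y ∧ entropy μ' Z = h}

/-- Conditioning a finitely supported probability space on an event `E`
(returning `μ` unchanged if `E` has zero probability). -/
noncomputable def condFinProb {Ω : Type*} [Fintype Ω] (μ : FinProb Ω) (E : Ω → Prop) :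
    FinProb Ω :=
  if h : 0 < ∑ ω, if E ω then μ.p ω else 0 then
    { p := fun ω => if E ω then μ.p ω / (∑ ω', if E ω' then μ.p ω' else 0) else 0
      nonneg := fun ω => by
        split
        · exact div_nonneg (μ.nonneg ω) h.le
        · exact le_refl 0
      sum_one := by
        have h' : ∀ ω, (if E ω then μ.p ω / (∑ ω', if E ω' then μ.p ω' else 0) else 0)
            = (if E ω then μ.p ω else 0) / (∑ ω', if E ω' then μ.p ω' else 0) := by
          intro ω; split <;> simp
        rw [Finset.sum_congr rfl (fun ω _ => h' ω), ← Finset.sum_div, div_self h.ne'] }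
  else μ

section Helpers

variable {Ω S T : Type*} [Fintype Ω]

lemma prob_nonneg (μ : FinProb Ω) (X : Ω → S) (s : S) : 0 ≤ prob μ X s := by
  apply Finset.sum_nonneg
  intro ω _
  split
  · exact μ.nonneg ω
  · exact le_refl 0

lemma prob_eq_zero' (μ : FinProb Ω) (X : Ω → S) {s : S}
    (h : ∀ ω, X ω ≠ s) : prob μ X s = 0 := by
  apply Finset.sum_eq_zero; intro ω _
  rw [if_neg (h ω)]

lemma prob_eq_zero (μ : FinProb Ω) (X : Ω → S) {s : S}
    (h : s ∉ Finset.univ.image X) : prob μ X s = 0 := by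
  apply prob_eq_zero'
  intro ω he; exact h (Finset.mem_image.2 ⟨ω, Finset.mem_univ ω, he⟩)

lemma sum_prob (μ : FinProb Ω) (X : Ω → S) {A : Finset S}
    (h : ∀ ω, X ω ∈ A) : ∑ s ∈ A, prob μ X s = 1 := by
  rw [← μ.sum_one]
  unfold prob
  rw [Finset.sum_comm]
  apply Finset.sum_congr rfl; intro ω _
  simp [Finset.sum_ite_eq' A (X ω) (fun _ => μ.p ω), h ω]

lemma sum_prob_pair_left (μ : FinProb Ω) (X : Ω → S) (Y : Ω → T) (s : S) {B : Finset T}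
    (h : ∀ ω, Y ω ∈ B) :
    ∑ t ∈ B, prob μ (fun ω => (X ω, Y ω)) (s, t) = prob μ X s := by
  unfold prob
  rw [Finset.sum_comm]
  apply Finset.sum_congr rfl; intro ω _
  by_cases hx : X ω = s <;>
    simp [Prod.ext_iff, hx, Finset.sum_ite_eq' B (Y ω) (fun _ => μ.p ω), h ω]

lemma sum_prob_pair_right (μ : FinProb Ω) (X : Ω → S) (Y : Ω → T) (t : T) {A : Finset S}
    (h : ∀ ω, X ω ∈ A) :
    ∑ s ∈ A, prob μ (fun ω => (X ω, Y ω)) (s, t) = prob μ Y t := by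
  unfold prob
  rw [Finset.sum_comm]
  apply Finset.sum_congr rfl; intro ω _
  by_cases hy : Y ω = t <;>
    simp [Prod.ext_iff, hy, Finset.sum_ite_eq' A (X ω) (fun _ => μ.p ω), h ω]

lemma prob_pair_le_left (μ : FinProb Ω) (X : Ω → S) (Y : Ω → T) (s : S) (t : T) :
    prob μ (fun ω => (X ω, Y ω)) (s, t) ≤ prob μ X s := by
  apply Finset.sum_le_sum; intro ω _
  by_cases hx : X ω = s <;> by_cases hy : Y ω = t <;>
    simp [Prod.ext_iff, hx, hy, μ.nonneg ω]

lemma prob_pair_le_right (μ : FinProb Ω) (X : Ω → S) (Y : Ω → T) (s : S) (t : T) :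
    prob μ (fun ω => (X ω, Y ω)) (s, t) ≤ prob μ Y t := by
  apply Finset.sum_le_sum; intro ω _
  by_cases hx : X ω = s <;> by_cases hy : Y ω = t <;>
    simp [Prod.ext_iff, hx, hy, μ.nonneg ω]

lemma entropy_eq_sum (μ : FinProb Ω) (X : Ω → S) {A : Finset S}
    (h : ∀ ω, X ω ∈ A) :
    entropy μ X = ∑ s ∈ A, Real.negMulLog (prob μ X s) := by
  unfold entropy
  apply Finset.sum_subset
  · exact Finset.image_subset_iff.2 fun ω _ => h ω
  · intro s _ hs
    rw [prob_eq_zero μ X hs, Real.negMulLog_zero]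

lemma gibbs_eq {I : Type*} (A : Finset I) (p q : I → ℝ)
    (hp : ∀ i ∈ A, 0 ≤ p i) (hq : ∀ i ∈ A, 0 ≤ q i)
    (hz : ∀ i ∈ A, q i = 0 → p i = 0)
    (hsum : ∑ i ∈ A, p i = ∑ i ∈ A, q i)
    (hkl : ∑ i ∈ A, (p i * Real.log (p i) - p i * Real.log (q i)) = 0) :
    ∀ i ∈ A, p i = q i := by
  set f : I → ℝ := fun i => p i * Real.log (p i) - p i * Real.log (q i) - (p i - q i) with hf
  have key : ∀ i ∈ A, 0 ≤ f i ∧ (f i = 0 → p i = q i) := by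
    intro i hi
    rcases eq_or_lt_of_le (hp i hi) with h0 | h0
    · constructor
      · simp [hf, ← h0]; exact hq i hi
      · intro hfi; simp [hf, ← h0] at hfi ⊢; linarith
    · have hq0 : 0 < q i := by
        rcases eq_or_lt_of_le (hq i hi) with h1 | h1
        · exact absurd (hz i hi h1.symm) (by linarith)
        · exact h1
      have hlog := Real.log_le_sub_one_of_pos (div_pos hq0 h0)
      rw [Real.log_div hq0.ne' h0.ne'] at hlog
      have hmul : p i * (q i / p i - 1) = q i - p i := by field_simp
      have hineq : p i * (Real.log (q i) - Real.log (p i)) ≤ q i - p i := by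
        calc p i * (Real.log (q i) - Real.log (p i)) ≤ p i * (q i / p i - 1) :=
              mul_le_mul_of_nonneg_left hlog h0.le
          _ = q i - p i := hmul
      constructor
      · simp only [hf]; nlinarith
      · intro hfi
        by_contra hne
        have hdne : q i / p i ≠ 1 := by
          intro h1
          have : q i = p i := by field_simp at h1; linarith
          exact hne this.symm
        have hstrict := Real.log_lt_sub_one_of_pos (div_pos hq0 h0) hdne
        rw [Real.log_div hq0.ne' h0.ne'] at hstrict
        have : p i * (Real.log (q i) - Real.log (p i)) < q i - p i := by
          calc p i * (Real.log (q i) - Real.log (p i)) < p i * (q i / p i - 1) :=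
                mul_lt_mul_of_pos_left hstrict h0
            _ = q i - p i := hmul
        simp only [hf] at hfi; nlinarith
  have hsf : ∑ i ∈ A, f i = 0 := by
    have hexp : ∑ i ∈ A, f i
        = (∑ i ∈ A, (p i * Real.log (p i) - p i * Real.log (q i)))
          - (∑ i ∈ A, p i - ∑ i ∈ A, q i) := by
      rw [← Finset.sum_sub_distrib, ← Finset.sum_sub_distrib]
    rw [hexp, hkl, hsum]; ring
  have hall := (Finset.sum_eq_zero_iff_of_nonneg (fun i hi => (key i hi).1)).1 hsf
  exact fun i hi => (key i hi).2 (hall i hi)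

lemma indep_of_entropy_add (μ : FinProb Ω) (X : Ω → S) (Y : Ω → T)
    (h : entropy μ (fun ω => (X ω, Y ω)) = entropy μ X + entropy μ Y) :
    IndepRV μ X Y := by
  classical
  set A := Finset.univ.image X with hA
  set B := Finset.univ.image Y with hB
  set pj : S × T → ℝ := fun z => prob μ (fun ω => (X ω, Y ω)) z with hpj
  set a : S → ℝ := fun s => prob μ X s with ha
  set b : T → ℝ := fun t => prob μ Y t with hb
  have hAmem : ∀ ω, X ω ∈ A := fun ω => Finset.mem_image.2 ⟨ω, Finset.mem_univ ω, rfl⟩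
  have hBmem : ∀ ω, Y ω ∈ B := fun ω => Finset.mem_image.2 ⟨ω, Finset.mem_univ ω, rfl⟩
  have himg : ∀ ω, (X ω, Y ω) ∈ A ×ˢ B := fun ω =>
    Finset.mem_product.2 ⟨hAmem ω, hBmem ω⟩
  have hble : ∀ s t, pj (s, t) ≤ a s := fun s t => prob_pair_le_left μ X Y s t
  have hble' : ∀ s t, pj (s, t) ≤ b t := fun s t => prob_pair_le_right μ X Y s t
  have hpjnn : ∀ z, 0 ≤ pj z := fun z => prob_nonneg μ _ z
  have hz : ∀ z ∈ A ×ˢ B, a z.1 * b z.2 = 0 → pj z = 0 := by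
    rintro ⟨s, t⟩ _ hzz
    rcases mul_eq_zero.1 hzz with h0 | h0
    · exact le_antisymm (h0 ▸ hble s t) (hpjnn (s, t))
    · exact le_antisymm (h0 ▸ hble' s t) (hpjnn (s, t))
  have hsum : ∑ z ∈ A ×ˢ B, pj z = ∑ z ∈ A ×ˢ B, a z.1 * b z.2 := by
    rw [sum_prob μ _ himg, Finset.sum_product]
    rw [show ∑ s ∈ A, ∑ t ∈ B, a s * b t = (∑ s ∈ A, a s) * (∑ t ∈ B, b t) by
      rw [Finset.sum_mul]; exact Finset.sum_congr rfl fun s _ => (Finset.mul_sum _ _ _).symm]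
    rw [sum_prob μ X hAmem, sum_prob μ Y hBmem]; norm_num
  have hkl : ∑ z ∈ A ×ˢ B, (pj z * Real.log (pj z) - pj z * Real.log (a z.1 * b z.2)) = 0 := by
    have e1 : ∑ z ∈ A ×ˢ B, pj z * Real.log (pj z) = - entropy μ (fun ω => (X ω, Y ω)) := by
      rw [entropy_eq_sum μ _ himg, ← Finset.sum_neg_distrib]
      exact Finset.sum_congr rfl fun z _ => by rw [Real.negMulLog]; ring
    have e2 : ∀ z ∈ A ×ˢ B, pj z * Real.log (a z.1 * b z.2)
        = pj z * Real.log (a z.1) + pj z * Real.log (b z.2) := by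
      rintro ⟨s, t⟩ _
      rcases eq_or_lt_of_le (hpjnn (s, t)) with h0 | h0
      · rw [← h0]; ring
      · have ha0 : 0 < a s := lt_of_lt_of_le h0 (hble s t)
        have hb0 : 0 < b t := lt_of_lt_of_le h0 (hble' s t)
        rw [Real.log_mul ha0.ne' hb0.ne']; ring
    have e3 : ∑ z ∈ A ×ˢ B, pj z * Real.log (a z.1) = - entropy μ X := by
      rw [Finset.sum_product, entropy_eq_sum μ X hAmem, ← Finset.sum_neg_distrib]
      apply Finset.sum_congr rfl; intro s _
      dsimp only
      rw [← Finset.sum_mul, sum_prob_pair_left μ X Y s hBmem, Real.negMulLog]; ring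
    have e4 : ∑ z ∈ A ×ˢ B, pj z * Real.log (b z.2) = - entropy μ Y := by
      rw [Finset.sum_product, Finset.sum_comm, entropy_eq_sum μ Y hBmem,
        ← Finset.sum_neg_distrib]
      apply Finset.sum_congr rfl; intro t _
      dsimp only
      rw [← Finset.sum_mul, sum_prob_pair_right μ X Y t hAmem, Real.negMulLog]; ring
    rw [Finset.sum_sub_distrib, e1, Finset.sum_congr rfl e2, Finset.sum_add_distrib, e3, e4]
    linarith [h]
  have hmain := gibbs_eq (A ×ˢ B) pj (fun z => a z.1 * b z.2)
    (fun z _ => hpjnn z) (fun z _ => mul_nonneg (prob_nonneg μ X z.1) (prob_nonneg μ Y z.2))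
    hz hsum hkl
  intro s t
  show pj (s, t) = a s * b t
  by_cases hs : s ∈ A
  · by_cases ht : t ∈ B
    · exact hmain (s, t) (Finset.mem_product.2 ⟨hs, ht⟩)
    · have hb0 : b t = 0 := prob_eq_zero μ Y ht
      have hj0 : pj (s, t) = 0 := le_antisymm (hb0 ▸ hble' s t) (hpjnn (s, t))
      rw [hj0, hb0]; ring
  · have ha0 : a s = 0 := prob_eq_zero μ X hs
    have hj0 : pj (s, t) = 0 := le_antisymm (ha0 ▸ hble s t) (hpjnn (s, t))
    rw [hj0, ha0]; ring

end Helpers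
/-- if `X₁, X₂` are independent copies of `X` and
`H(X₁+X₂) = H(X₁+X₂ | X₂)`, then `X₁+X₂` is independent of `X₂`, and
`range(X) − range(X)` is a finite subgroup of `G` on a coset of which `X` is uniformly
distributed. -/
theorem indep_and_uniform_of_entropy_eq_condEntropy {G Ω Ω' : Type*} [AddCommGroup G]
    [Fintype Ω] [Fintype Ω'] (μ : FinProb Ω) (X : Ω → G)
    (μ' : FinProb Ω') (X₁ X₂ : Ω' → G)
    (h₁ : IdentDist μ' X₁ μ X) (h₂ : IdentDist μ' X₂ μ X) (hindep : IndepRV μ' X₁ X₂)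
    (hent : entropy μ' (fun ω => X₁ ω + X₂ ω)
      = condEntropy μ' (fun ω => X₁ ω + X₂ ω) X₂) :
    IndepRV μ' (fun ω => X₁ ω + X₂ ω) X₂ ∧
    ∃ (H : AddSubgroup G) (c : G),
      ((rangeF μ X - rangeF μ X : Finset G) : Set G) = (H : Set G) ∧
      ∀ g : G, prob μ X g =
        if g ∈ c +ᵥ (H : Set G) then (((rangeF μ X - rangeF μ X).card : ℝ))⁻¹ else 0 := by
  classical
  have hadd : entropy μ' (fun ω => ((fun ω => X₁ ω + X₂ ω) ω, X₂ ω))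
      = entropy μ' (fun ω => X₁ ω + X₂ ω) + entropy μ' X₂ := by
    unfold condEntropy at hent; linarith
  have hSind : IndepRV μ' (fun ω => X₁ ω + X₂ ω) X₂ :=
    indep_of_entropy_add μ' (fun ω => X₁ ω + X₂ ω) X₂ hadd
  refine ⟨hSind, ?_⟩
  set p : G → ℝ := fun g => prob μ X g with hp
  set q : G → ℝ := fun g => prob μ' (fun ω => X₁ ω + X₂ ω) g with hq
  -- shift identity
  have hshift : ∀ s t : G, prob μ' (fun ω => (X₁ ω + X₂ ω, X₂ ω)) (s, t)
      = prob μ' (fun ω => (X₁ ω, X₂ ω)) (s - t, t) := by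
    intro s t
    apply Finset.sum_congr rfl; intro ω _
    simp only [Prod.mk.injEq]
    by_cases h2 : X₂ ω = t
    · subst h2
      have hiff : X₁ ω + X₂ ω = s ↔ X₁ ω = s - X₂ ω :=
        ⟨fun h => eq_sub_of_add_eq h, fun h => by rw [h]; abel⟩
      simp [hiff]
    · simp [h2]
  have key : ∀ s t : G, q s * p t = p (s - t) * p t := by
    intro s t
    have e1 : prob μ' (fun ω => (X₁ ω + X₂ ω, X₂ ω)) (s, t) = q s * prob μ' X₂ t :=
      hSind s t
    have e3 : prob μ' (fun ω => (X₁ ω, X₂ ω)) (s - t, t) = p (s - t) * p t := by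
      rw [hindep (s - t) t, h₁ (s - t), h₂ t]
    have e4 := e1.symm.trans ((hshift s t).trans e3)
    rw [h₂ t] at e4
    exact e4
  have key2 : ∀ s t : G, p t ≠ 0 → p (s - t) = q s := by
    intro s t ht
    exact mul_right_cancel₀ ht (key s t).symm
  -- essential range
  have memR : ∀ g : G, g ∈ rangeF μ X ↔ p g ≠ 0 := by
    intro g
    unfold rangeF
    constructor
    · intro hg; exact (Finset.mem_filter.1 hg).2
    · intro hg
      refine Finset.mem_filter.2 ⟨?_, hg⟩
      by_contra hni
      exact hg (prob_eq_zero μ X hni)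
  set R : Finset G := rangeF μ X with hR
  set D : Finset G := rangeF μ X - rangeF μ X with hD
  have inv' : ∀ g d : G, d ∈ D → p (g + d) = p g := by
    intro g d hd
    rcases Finset.mem_sub.1 hd with ⟨x, hx, y, hy, hxy⟩
    have hx0 : p x ≠ 0 := (memR x).1 hx
    have hy0 : p y ≠ 0 := (memR y).1 hy
    have e1 : g + d = (g + x) - y := by rw [← hxy]; abel
    have e2 : g = (g + x) - x := by abel
    rw [e1, key2 (g + x) y hy0, ← key2 (g + x) x hx0, ← e2]
  have hmem : ∀ ω, X ω ∈ Finset.univ.image X :=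
    fun ω => Finset.mem_image.2 ⟨ω, Finset.mem_univ ω, rfl⟩
  have hex : ∃ c : G, p c ≠ 0 := by
    by_contra hc
    push_neg at hc
    have h1 := sum_prob μ X hmem
    rw [Finset.sum_eq_zero (fun g _ => hc g)] at h1
    norm_num at h1
  obtain ⟨c, hc⟩ := hex
  have hcR : c ∈ R := (memR c).2 hc
  have memD : ∀ d : G, d ∈ D ↔ p (c + d) ≠ 0 := by
    intro d
    constructor
    · intro hd; rw [inv' c d hd]; exact hc
    · intro hd
      exact Finset.mem_sub.2 ⟨c + d, (memR _).2 hd, c, hcR, by abel⟩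
  -- closure properties
  have hAdd : ∀ {a b : G}, a ∈ (↑D : Set G) → b ∈ (↑D : Set G) → a + b ∈ (↑D : Set G) := by
    intro a b ha hb
    have ha' : a ∈ D := ha
    have hb' : b ∈ D := hb
    show a + b ∈ D
    rw [memD, show c + (a + b) = c + a + b from by abel, inv' (c + a) b hb']
    exact (memD a).1 ha'
  have hZero : (0 : G) ∈ (↑D : Set G) := by
    show (0 : G) ∈ D
    rw [memD, add_zero]; exact hc
  have hNeg : ∀ {a : G}, a ∈ (↑D : Set G) → -a ∈ (↑D : Set G) := by
    intro a ha
    have ha' : a ∈ D := ha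
    show -a ∈ D
    rw [memD]
    have h2' := inv' (c + -a) a ha'
    rw [show c + -a + a = c from by abel] at h2'
    rw [← h2']
    exact hc
  -- facts for uniformity
  have hvalR : ∀ x ∈ R, p x = p c := by
    intro x hx
    have hd : x - c ∈ D := Finset.mem_sub.2 ⟨x, hx, c, hcR, rfl⟩
    have h3 := inv' c (x - c) hd
    rw [show c + (x - c) = x from by abel] at h3
    rw [h3]
  have hsumR : ∑ x ∈ R, p x = 1 := by
    rw [← sum_prob μ X hmem]
    apply Finset.sum_subset
    · exact Finset.filter_subset _ _
    · intro x hx hnx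
      by_contra hne
      exact hnx (Finset.mem_filter.2 ⟨hx, hne⟩)
  have hDR : D = R.image (fun x => x - c) := by
    ext d
    rw [Finset.mem_image]
    constructor
    · intro hd
      exact ⟨c + d, (memR _).2 (by rw [inv' c d hd]; exact hc), by abel⟩
    · rintro ⟨r, hr, rfl⟩
      rw [memD, show c + (r - c) = r from by abel]
      exact (memR r).1 hr
  have hcard : D.card = R.card := by
    rw [hDR]
    exact Finset.card_image_of_injective _ fun x y h => by
      rwa [sub_left_inj] at h
  have hRcard : (R.card : ℝ) * p c = 1 := by
    rw [← hsumR, Finset.sum_congr rfl hvalR, Finset.sum_const, nsmul_eq_mul]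
  have hcne : (R.card : ℝ) ≠ 0 := by
    have := Finset.card_ne_zero_of_mem hcR
    exact_mod_cast this
  have hpc : p c = ((D.card : ℝ))⁻¹ := by
    rw [hcard]
    field_simp
    linarith [hRcard]
  have hvadd : ∀ g : G, g ∈ c +ᵥ (↑D : Set G) ↔ p g ≠ 0 := by
    intro g
    rw [Set.mem_vadd_set]
    constructor
    · rintro ⟨d, hd, rfl⟩
      have hd' : d ∈ D := hd
      rw [vadd_eq_add, inv' c d hd']
      exact hc
    · intro hg
      refine ⟨g - c, ?_, by rw [vadd_eq_add]; abel⟩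
      show g - c ∈ D
      exact Finset.mem_sub.2 ⟨g, (memR g).2 hg, c, hcR, rfl⟩
  refine ⟨{ carrier := (↑D : Set G)
            add_mem' := hAdd
            zero_mem' := hZero
            neg_mem' := hNeg }, c, rfl, ?_⟩
  intro g
  show p g = if g ∈ c +ᵥ (↑D : Set G) then ((D.card : ℝ))⁻¹ else 0
  by_cases hg : p g = 0
  · rw [if_neg (fun hmem' => (hvadd g).1 hmem' hg)]
    exact hg
  · rw [if_pos ((hvadd g).2 hg)]
    rw [hvalR g ((memR g).2 hg)]
    exact hpc
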